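/- arXiv:1607.07072 — 2 statements merged into one kernel-verified Lean document; each statement's English description precedes it below -/
import Mathlib

section
/- For the Abel equation z' = f₂ z² + f₃ z³ with constant f₂ = −(3+4/p) and f₃(w) = 2(1+1/p)(1+2/p)(w − w^{2−1/(p+1)}), the Abel invariant Φ_p(w) = (1/3)(f₃ f₂' − f₂ f₃') + (2/27) f₂³ equals (2(3p+4)/(27p³)) [(3p+2) − 9(p+2)(2p+1) w^{p/(p+1)}]. -/
/-- For the Abel equation `z' = f₂ z² + f₃ z³` with constant
`f₂ = −(3+4/p)` and `f₃(w) = 2(1+1/p)(1+2/p)(w − w^(2−1/(p+1)))`, the Abel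
invariant `Φ_p = (1/3)(f₃ f₂' − f₂ f₃') + (2/27) f₂³` equals
`(2(3p+4)/(27p³)) [(3p+2) − 9(p+2)(2p+1) w^(p/(p+1))]`. -/
theorem stmt10 (p : ℝ) (hp : 0 < p) (w : ℝ) (hw : 0 < w) :
    (1 / 3) *
        ((2 * (1 + 1 / p) * (1 + 2 / p) * (w - w ^ (2 - 1 / (p + 1)))) *
            deriv (fun _ : ℝ => -(3 + 4 / p)) w -
          (-(3 + 4 / p)) *
            deriv (fun w : ℝ =>
              2 * (1 + 1 / p) * (1 + 2 / p) * (w - w ^ (2 - 1 / (p + 1)))) w) +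
      (2 / 27) * (-(3 + 4 / p)) ^ 3 =
    (2 * (3 * p + 4) / (27 * p ^ 3)) *
      ((3 * p + 2) - 9 * (p + 2) * (2 * p + 1) * w ^ (p / (p + 1))) := by
  have hp1 : p + 1 ≠ 0 := by positivity
  have hd : HasDerivAt (fun w : ℝ => 2 * (1 + 1 / p) * (1 + 2 / p) * (w - w ^ (2 - 1 / (p + 1))))
      (2 * (1 + 1 / p) * (1 + 2 / p) * (1 - (2 - 1 / (p + 1)) * w ^ (2 - 1 / (p + 1) - 1))) w :=
    ((hasDerivAt_id w).sub (Real.hasDerivAt_rpow_const (Or.inl hw.ne'))).const_mul _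
  rw [hd.deriv, deriv_const]
  have he : 2 - 1 / (p + 1) - 1 = p / (p + 1) := by field_simp; ring
  rw [he]
  have hpne : p ≠ 0 := hp.ne'
  field_simp
  ring
end

section
/- There is no real constant α such that 3807 √w + 11664 w + 14^{2/3} (5 − 81√w)^{5/3} α = 195 holds for all w in some open interval of (0, ∞). -/
open Polynomial in
lemma key12 (K s e : ℝ) (hse : s < e)
    (h : ∀ t ∈ Set.Ioo s e, (195 - 3807*t - 11664*t^2)^3 = K * (5 - 81*t)^5) : False := by
  set P : ℝ[X] := (C 195 - C 3807 * X - C 11664 * X^2)^3 - C K * (C 5 - C 81 * X)^5 with hPdef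
  have hroot : ∀ t ∈ Set.Ioo s e, P.IsRoot t := by
    intro t ht
    have := h t ht
    simp only [hPdef, IsRoot, eval_sub, eval_pow, eval_mul, eval_C, eval_X]
    linarith
  have hP : P = 0 := by
    refine P.eq_zero_of_infinite_isRoot ?_
    exact (Set.Ioo_infinite hse).mono hroot
  have := congrArg (Polynomial.eval ((5:ℝ)/81)) hP
  simp only [hPdef, eval_sub, eval_pow, eval_mul, eval_C, eval_X, eval_zero] at this
  norm_num at this

/-- There is no real constant `α` such that
`3807 √w + 11664 w + 14^(2/3) (5 − 81√w)^(5/3) α = 195`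
holds for all `w` in some nonempty open subinterval of `(0,∞)`. -/
theorem stmt12 :
    ¬ ∃ (α a b : ℝ), 0 ≤ a ∧ a < b ∧
      ∀ w ∈ Set.Ioo a b,
        3807 * Real.sqrt w + 11664 * w +
          (14 : ℝ) ^ ((2 : ℝ) / 3) *
            (5 - 81 * Real.sqrt w) ^ ((5 : ℝ) / 3) * α = 195 := by
  rintro ⟨α, a, b, ha, hab, h⟩
  set s := Real.sqrt a with hsdef
  set e := Real.sqrt b with hedef
  have hse : s < e := Real.sqrt_lt_sqrt ha hab
  have hs0 : 0 ≤ s := Real.sqrt_nonneg a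
  have hC3 : ((14:ℝ) ^ ((2:ℝ)/3))^3 = 196 := by
    rw [← Real.rpow_natCast ((14:ℝ) ^ ((2:ℝ)/3)) 3,
      ← Real.rpow_mul (by norm_num : (0:ℝ) ≤ 14)]
    rw [show ((2:ℝ)/3) * (3:ℕ) = ((2:ℕ):ℝ) by push_cast; ring, Real.rpow_natCast]
    norm_num
  have ht : ∀ t ∈ Set.Ioo s e,
      (5 - 81*t) ^ ((5:ℝ)/3) * ((14:ℝ) ^ ((2:ℝ)/3) * α)
        = 195 - 3807*t - 11664*t^2 := by
    rintro t ⟨ht1, ht2⟩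
    have ht0 : 0 ≤ t := hs0.trans ht1.le
    have hw : Real.sqrt (t^2) = t := Real.sqrt_sq ht0
    have hmem : t^2 ∈ Set.Ioo a b := by
      constructor
      · have : s^2 < t^2 := by nlinarith
        rwa [hsdef, Real.sq_sqrt ha] at this
      · have : t^2 < e^2 := by nlinarith [Real.sqrt_nonneg b]
        rwa [hedef, Real.sq_sqrt (ha.trans hab.le)] at this
    have := h (t^2) hmem
    rw [hw] at this
    linear_combination this
  by_cases hs : s < 5/81
  · -- positive base case
    refine key12 (196 * α^3) s (min e (5/81)) (lt_min hse hs) ?_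
    rintro t ⟨ht1, ht2⟩
    have hte : t < e := ht2.trans_le (min_le_left _ _)
    have htm : t < 5/81 := ht2.trans_le (min_le_right _ _)
    have hu : (0:ℝ) < 5 - 81*t := by linarith
    have heq := ht t ⟨ht1, hte⟩
    have hcube : ((5 - 81*t) ^ ((5:ℝ)/3))^3 = (5 - 81*t)^5 := by
      rw [← Real.rpow_natCast ((5 - 81*t) ^ ((5:ℝ)/3)) 3, ← Real.rpow_mul hu.le]
      rw [show ((5:ℝ)/3) * (3:ℕ) = ((5:ℕ):ℝ) by push_cast; ring, Real.rpow_natCast]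
    calc (195 - 3807*t - 11664*t^2)^3
        = ((5 - 81*t) ^ ((5:ℝ)/3))^3 * ((14:ℝ) ^ ((2:ℝ)/3))^3 * α^3 := by
          rw [← heq]; ring
      _ = 196 * α^3 * (5 - 81*t)^5 := by rw [hcube, hC3]; ring
  · -- negative base case
    push_neg at hs
    refine key12 (-(49/2) * α^3) s e hse ?_
    rintro t ⟨ht1, ht2⟩
    have hu : 5 - 81*t < 0 := by nlinarith
    have hu' : (0:ℝ) < -(5 - 81*t) := by linarith
    have hcos : Real.cos ((5:ℝ)/3 * Real.pi) = 1/2 := by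
      rw [show (5:ℝ)/3 * Real.pi = -(Real.pi/3) + 2*Real.pi by ring,
        Real.cos_add_two_pi, Real.cos_neg, Real.cos_pi_div_three]
    have hrw : (5 - 81*t) ^ ((5:ℝ)/3) = (-(5 - 81*t)) ^ ((5:ℝ)/3) * (1/2) := by
      rw [Real.rpow_def_of_neg hu, Real.rpow_def_of_pos hu', ← hcos]
      rw [show Real.log (5 - 81*t) = Real.log (-(5 - 81*t)) by
        rw [← Real.log_neg_eq_log (5 - 81*t)]]
    have heq := ht t ⟨ht1, ht2⟩
    rw [hrw] at heq
    have hcube : ((-(5 - 81*t)) ^ ((5:ℝ)/3))^3 = (-(5 - 81*t))^5 := by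
      rw [← Real.rpow_natCast ((-(5 - 81*t)) ^ ((5:ℝ)/3)) 3, ← Real.rpow_mul hu'.le]
      rw [show ((5:ℝ)/3) * (3:ℕ) = ((5:ℕ):ℝ) by push_cast; ring, Real.rpow_natCast]
    calc (195 - 3807*t - 11664*t^2)^3
        = ((-(5 - 81*t)) ^ ((5:ℝ)/3))^3 * (1/8) * ((14:ℝ) ^ ((2:ℝ)/3))^3 * α^3 := by
          rw [← heq]; ring
      _ = -(49/2) * α^3 * (5 - 81*t)^5 := by rw [hcube, hC3]; ring
end
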